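/- Let r ∈ ℤ_{≥0}, λ ∈ ℂ*, α ∈ ℂ, and let V be an irreducible L̄_r-module. Then the Virasoro module M(V,Ω(λ,α)) is reducible (has a submodule other than 0 and the whole space) if and only if V is isomorphic to V_α, i.e. V is one-dimensional with B_0 = α·id and B_i = 0 for 1 ≤ i ≤ r. -/

import Mathlib

open TensorProduct

/-- Substitution `X ↦ X - k` on `ℂ[X]`. -/
noncomputable def shiftP (k : ℂ) : Polynomial ℂ →ₗ[ℂ] Polynomial ℂ :=
  (Polynomial.aeval (Polynomial.X - Polynomial.C k)).toLinearMap

/-- The operator `L_k` on `Ω(λ,α) = ℂ[X]`: `L_k f(X) = λ^k (X - kα) f(X - k)`. -/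
noncomputable def omegaL (lam al : ℂ) (k : ℤ) : Polynomial ℂ →ₗ[ℂ] Polynomial ℂ :=
  (lam ^ k) •
    ((LinearMap.mulLeft ℂ (Polynomial.X - Polynomial.C ((k : ℂ) * al))).comp (shiftP (k : ℂ)))

/-- The operator `L_k` on the Virasoro module `M(V,Ω(λ,α)) = V ⊗ ℂ[X]`:
`L_k (v ⊗ f) = v ⊗ λ^k (X - kα) f(X - k)
  + ∑_{j=0}^r (k^{j+1}/(j+1)!) B_j v ⊗ λ^k f(X - k)`. -/
noncomputable def M1Op {V : Type*} [AddCommGroup V] [Module ℂ V]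
    (B : ℕ → V →ₗ[ℂ] V) (r : ℕ) (lam al : ℂ) (k : ℤ) :
    V ⊗[ℂ] Polynomial ℂ →ₗ[ℂ] V ⊗[ℂ] Polynomial ℂ :=
  TensorProduct.map LinearMap.id (omegaL lam al k) +
  ∑ j ∈ Finset.range (r + 1),
    (((k : ℂ) ^ (j + 1)) / ((j + 1).factorial : ℂ)) •
      TensorProduct.map (B j) ((lam ^ k) • shiftP (k : ℂ))


open Polynomial Finset

section Aux

variable {V : Type*} [AddCommGroup V] [Module ℂ V]

/-- The `m`-th coefficient (in `k`) of `λ^{-k} L_k (v ⊗ X^i)`. -/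
noncomputable def Yc (B : ℕ → V →ₗ[ℂ] V) (r : ℕ) (al : ℂ) (v : V) (i m : ℕ) :
    V ⊗[ℂ] Polynomial ℂ :=
  ∑ t ∈ range (i + 1),
    ((if i - t = m then ((-1:ℂ)^(i-t) * (i.choose t : ℂ)) •
        (v ⊗ₜ[ℂ] ((Polynomial.X : Polynomial ℂ) ^ (t+1))) else 0)
    + (if i - t + 1 = m then ((-1:ℂ)^(i-t) * (i.choose t : ℂ) * (-al)) •
        (v ⊗ₜ[ℂ] ((Polynomial.X : Polynomial ℂ) ^ t)) else 0)
    + ∑ j ∈ range (r + 1),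
        (if i - t + (j+1) = m then ((-1:ℂ)^(i-t) * (i.choose t : ℂ) * (((j+1).factorial : ℂ))⁻¹) •
          ((B j v) ⊗ₜ[ℂ] ((Polynomial.X : Polynomial ℂ) ^ t)) else 0))

lemma expand_pure (B : ℕ → V →ₗ[ℂ] V) (r : ℕ) (lam al : ℂ) (hlam : lam ≠ 0)
    (i : ℕ) (v : V) (k : ℤ) (M : ℕ) (hM : i + r + 2 ≤ M) :
    (lam ^ (-k)) • M1Op B r lam al k (v ⊗ₜ[ℂ] ((Polynomial.X : Polynomial ℂ) ^ i))
      = ∑ m ∈ range M, (k : ℂ) ^ m • Yc B r al v i m := by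
  have hsh : shiftP (k : ℂ) ((Polynomial.X : Polynomial ℂ) ^ i)
      = (Polynomial.X - Polynomial.C (k:ℂ)) ^ i := by
    simp [shiftP, map_pow]
  -- binomial expansion
  have hbin : (Polynomial.X - Polynomial.C (k:ℂ)) ^ i
      = ∑ t ∈ range (i + 1),
          ((-1:ℂ)^(i-t) * (k:ℂ)^(i-t) * (i.choose t : ℂ)) • (Polynomial.X : Polynomial ℂ) ^ t := by
    rw [sub_eq_add_neg, add_pow]
    refine Finset.sum_congr rfl fun t ht => ?_
    rw [← Polynomial.C_neg, ← Polynomial.C_pow, neg_pow,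
      show ((i.choose t : ℕ) : Polynomial ℂ) = Polynomial.C ((i.choose t : ℕ) : ℂ) by simp,
      Polynomial.smul_eq_C_mul]
    simp only [Polynomial.C_mul]
    ring
  -- step 1 : value of λ^{-k} • M1Op on the pure tensor
  have h1 : (lam ^ (-k)) • M1Op B r lam al k (v ⊗ₜ[ℂ] ((Polynomial.X : Polynomial ℂ) ^ i))
      = v ⊗ₜ[ℂ] ((Polynomial.X - Polynomial.C ((k:ℂ) * al)) * (Polynomial.X - Polynomial.C (k:ℂ)) ^ i)
        + ∑ j ∈ range (r + 1), (((k : ℂ) ^ (j + 1)) / ((j + 1).factorial : ℂ)) •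
            ((B j v) ⊗ₜ[ℂ] ((Polynomial.X - Polynomial.C (k:ℂ)) ^ i)) := by
    have hcan : ∀ z : V ⊗[ℂ] Polynomial ℂ, (lam ^ (-k)) • ((lam ^ k) • z) = z := by
      intro z
      rw [smul_smul, ← zpow_add₀ hlam, neg_add_cancel, zpow_zero, one_smul]
    simp only [M1Op, LinearMap.add_apply, LinearMap.sum_apply, LinearMap.smul_apply,
      TensorProduct.map_tmul, LinearMap.id_coe, id_eq, omegaL, LinearMap.coe_comp,
      Function.comp_apply, LinearMap.mulLeft_apply, hsh, tmul_smul, smul_add, Finset.smul_sum]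
    rw [hcan]
    refine congrArg _ (Finset.sum_congr rfl fun j _ => ?_)
    rw [smul_comm ((lam:ℂ)^(-k)) _, hcan]
  rw [h1]
  have hch : ∀ t : ℕ, ((-1:ℂ)^(i-t) * (k:ℂ)^(i-t) * (i.choose t : ℂ)) = ((-1:ℂ)^(i-t) * (k:ℂ)^(i-t) * (i.choose t : ℂ)) := fun _ => rfl
  -- canonical middle form
  have hLHS : v ⊗ₜ[ℂ] ((Polynomial.X - Polynomial.C ((k:ℂ) * al)) * (Polynomial.X - Polynomial.C (k:ℂ)) ^ i)
        + ∑ j ∈ range (r + 1), (((k : ℂ) ^ (j + 1)) / ((j + 1).factorial : ℂ)) •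
            ((B j v) ⊗ₜ[ℂ] ((Polynomial.X - Polynomial.C (k:ℂ)) ^ i))
      = ∑ t ∈ range (i + 1),
        ( ((-1:ℂ)^(i-t) * (k:ℂ)^(i-t) * (i.choose t : ℂ)) •
            (v ⊗ₜ[ℂ] ((Polynomial.X : Polynomial ℂ) ^ (t+1)))
        + (((-1:ℂ)^(i-t) * (k:ℂ)^(i-t) * (i.choose t : ℂ)) * (-((k:ℂ) * al))) •
            (v ⊗ₜ[ℂ] ((Polynomial.X : Polynomial ℂ) ^ t))
        + ∑ j ∈ range (r + 1),
            ((((k : ℂ) ^ (j + 1)) / ((j + 1).factorial : ℂ)) * ((-1:ℂ)^(i-t) * (k:ℂ)^(i-t) * (i.choose t : ℂ))) •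
              ((B j v) ⊗ₜ[ℂ] ((Polynomial.X : Polynomial ℂ) ^ t)) ) := by
    have hmul : ∀ t : ℕ, (Polynomial.X - Polynomial.C ((k:ℂ) * al)) * (Polynomial.X : Polynomial ℂ) ^ t
        = (Polynomial.X : Polynomial ℂ) ^ (t+1) + (-((k:ℂ) * al)) • (Polynomial.X : Polynomial ℂ) ^ t := by
      intro t
      rw [Polynomial.smul_eq_C_mul]
      simp only [map_neg]
      ring
    have e1 : v ⊗ₜ[ℂ] ((Polynomial.X - Polynomial.C ((k:ℂ) * al)) * (Polynomial.X - Polynomial.C (k:ℂ)) ^ i)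
        = ∑ t ∈ range (i + 1),
          ( ((-1:ℂ)^(i-t) * (k:ℂ)^(i-t) * (i.choose t : ℂ)) •
              (v ⊗ₜ[ℂ] ((Polynomial.X : Polynomial ℂ) ^ (t+1)))
          + (((-1:ℂ)^(i-t) * (k:ℂ)^(i-t) * (i.choose t : ℂ)) * (-((k:ℂ) * al))) •
              (v ⊗ₜ[ℂ] ((Polynomial.X : Polynomial ℂ) ^ t)) ) := by
      rw [hbin, Finset.mul_sum, tmul_sum]
      refine Finset.sum_congr rfl fun t ht => ?_
      rw [mul_smul_comm, hmul, smul_add, tmul_add, tmul_smul, tmul_smul, tmul_smul, smul_smul]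
    have e2 : ∑ j ∈ range (r + 1), (((k : ℂ) ^ (j + 1)) / ((j + 1).factorial : ℂ)) •
            ((B j v) ⊗ₜ[ℂ] ((Polynomial.X - Polynomial.C (k:ℂ)) ^ i))
        = ∑ t ∈ range (i + 1), ∑ j ∈ range (r + 1),
            ((((k : ℂ) ^ (j + 1)) / ((j + 1).factorial : ℂ)) * ((-1:ℂ)^(i-t) * (k:ℂ)^(i-t) * (i.choose t : ℂ))) •
              ((B j v) ⊗ₜ[ℂ] ((Polynomial.X : Polynomial ℂ) ^ t)) := by
      rw [Finset.sum_congr rfl (fun j _ => by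
        rw [hbin, tmul_sum, Finset.smul_sum,
          Finset.sum_congr rfl (fun t _ => by rw [tmul_smul, smul_smul])])]
      exact Finset.sum_comm
    rw [e1, e2, ← Finset.sum_add_distrib]
  rw [hLHS]
  -- now the RHS
  rw [Finset.sum_congr rfl (fun m (_ : m ∈ range M) => by
    rw [Yc, Finset.smul_sum] :
      ∀ m ∈ range M, (k : ℂ) ^ m • Yc B r al v i m = _), Finset.sum_comm]
  refine Finset.sum_congr rfl fun t ht => ?_
  have htm : t ≤ i := by simp at ht; omega
  simp only [smul_add, Finset.sum_add_distrib]
  congr 1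
  · congr 1
    · -- piece 1
      simp only [smul_ite, smul_zero]
      rw [Finset.sum_ite_eq (range M) (i - t)
        (fun m => (k:ℂ)^m • (((-1:ℂ)^(i-t) * (i.choose t : ℂ)) •
          (v ⊗ₜ[ℂ] ((Polynomial.X : Polynomial ℂ) ^ (t+1))))), if_pos (by simp; omega), smul_smul]
      congr 1
      ring
    · -- piece 2
      simp only [smul_ite, smul_zero]
      rw [Finset.sum_ite_eq (range M) (i - t + 1)
        (fun m => (k:ℂ)^m • (((-1:ℂ)^(i-t) * (i.choose t : ℂ) * (-al)) •
          (v ⊗ₜ[ℂ] ((Polynomial.X : Polynomial ℂ) ^ t)))), if_pos (by simp; omega), smul_smul]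
      congr 1
      ring
  · -- piece 3
    rw [Finset.sum_congr rfl (fun m (_ : m ∈ range M) => Finset.smul_sum), Finset.sum_comm]
    refine Finset.sum_congr rfl fun j hj => ?_
    have hjr : j ≤ r := by simp at hj; omega
    simp only [smul_ite, smul_zero]
    rw [Finset.sum_ite_eq (range M) (i - t + (j+1))
      (fun m => (k:ℂ)^m • (((-1:ℂ)^(i-t) * (i.choose t : ℂ) * (((j+1).factorial : ℂ))⁻¹) •
        ((B j v) ⊗ₜ[ℂ] ((Polynomial.X : Polynomial ℂ) ^ t)))), if_pos (by simp; omega), smul_smul]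
    congr 1
    rw [pow_add]
    field_simp
    ring

lemma Yc_eq_zero (B : ℕ → V →ₗ[ℂ] V) (r : ℕ) (al : ℂ) (s : ℕ)
    (hB' : ∀ j, s < j → B j = 0) (d i : ℕ) (hid : i ≤ d) (hine : i ≠ d) (w : V) :
    Yc B r al w i (d + s + 1) = 0 := by
  apply Finset.sum_eq_zero
  intro t ht
  have htI : t ≤ i := by simp at ht; omega
  rw [if_neg (by omega), if_neg (by omega)]
  rw [Finset.sum_eq_zero (fun j hj => ?_)]
  · simp
  · by_cases hc : i - t + (j + 1) = d + s + 1
    · rw [if_pos hc, hB' j (by omega)]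
      simp
    · rw [if_neg hc]

lemma Yc_top (B : ℕ → V →ₗ[ℂ] V) (r : ℕ) (al : ℂ) (s : ℕ) (hs : s ≤ r)
    (hB' : ∀ j, s < j → B j = 0) (d : ℕ) (w : V) :
    Yc B r al w d (d + s + 1)
      = (((-1:ℂ)^d * (((s+1).factorial : ℂ))⁻¹) • (B s w)
          + (if s = 0 then ((-1:ℂ)^d * (-al)) • w else 0)) ⊗ₜ[ℂ] (1 : Polynomial ℂ) := by
  rw [Yc, Finset.sum_eq_single_of_mem 0 (by simp)]
  · have h3 : ∑ j ∈ range (r + 1),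
        (if d - 0 + (j+1) = d + s + 1 then
          ((-1:ℂ)^(d-0) * (d.choose 0 : ℂ) * (((j+1).factorial : ℂ))⁻¹) •
            ((B j w) ⊗ₜ[ℂ] ((Polynomial.X : Polynomial ℂ) ^ 0)) else 0)
        = ((-1:ℂ)^d * (((s+1).factorial : ℂ))⁻¹) • ((B s w) ⊗ₜ[ℂ] (1 : Polynomial ℂ)) := by
      rw [Finset.sum_eq_single_of_mem s (by simp; omega)]
      · rw [if_pos (by omega)]
        simp
      · intro j _ hjs
        rw [if_neg (by omega)]
    rw [h3, if_neg (by omega), TensorProduct.add_tmul, TensorProduct.ite_tmul,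
      ← smul_tmul', zero_add, add_comm]
    congr 1
    by_cases hs0 : s = 0
    · rw [if_pos (by omega : d - 0 + 1 = d + s + 1), if_pos hs0]
      simp [smul_tmul']
      rw [TensorProduct.neg_tmul]
    · rw [if_neg (by omega : ¬ (d - 0 + 1 = d + s + 1)), if_neg hs0]
  · intro t ht htne
    have htI : t ≤ d := by simp at ht; omega
    rw [if_neg (by omega), if_neg (by omega)]
    rw [Finset.sum_eq_zero (fun j hj => ?_)]
    · simp
    · by_cases hc : d - t + (j + 1) = d + s + 1
      · rw [if_pos hc, hB' j (by omega)]
        simp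
      · rw [if_neg hc]


variable {V : Type*} [AddCommGroup V] [Module ℂ V]

/-- coefficient extraction `v ⊗ f ↦ f.coeff i • v`. -/
noncomputable def piC (i : ℕ) : V ⊗[ℂ] Polynomial ℂ →ₗ[ℂ] V :=
  (TensorProduct.rid ℂ V).toLinearMap ∘ₗ LinearMap.lTensor V (Polynomial.lcoeff ℂ i)

@[simp] lemma piC_tmul (i : ℕ) (v : V) (f : Polynomial ℂ) :
    piC i (v ⊗ₜ f) = f.coeff i • v := by
  simp [piC, TensorProduct.rid_tmul]

lemma repr_of_family (D : ℕ) (v : ℕ → V)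
    (x : V ⊗[ℂ] Polynomial ℂ)
    (hv : x = ∑ i ∈ range (D + 1), v i ⊗ₜ ((Polynomial.X : Polynomial ℂ) ^ i)) :
    ∀ j, piC j x = if j ≤ D then v j else 0 := by
  intro j
  rw [hv, map_sum]
  simp only [piC_tmul, Polynomial.coeff_X_pow, ite_smul, zero_smul, one_smul]
  rw [Finset.sum_ite_eq (range (D+1)) j v]
  simp [Nat.lt_succ_iff]

lemma exists_repr (x : V ⊗[ℂ] Polynomial ℂ) :
    ∃ D : ℕ, (∀ i, D < i → piC i x = 0) ∧
      x = ∑ i ∈ range (D + 1), piC i x ⊗ₜ ((Polynomial.X : Polynomial ℂ) ^ i) := by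
  have H : ∃ D : ℕ, ∃ v : ℕ → V,
      x = ∑ i ∈ range (D + 1), v i ⊗ₜ ((Polynomial.X : Polynomial ℂ) ^ i) := by
    induction x using TensorProduct.induction_on with
    | zero => exact ⟨0, fun _ => 0, by simp⟩
    | tmul v f =>
      refine ⟨f.natDegree, fun i => f.coeff i • v, ?_⟩
      conv_lhs => rw [f.as_sum_range' (f.natDegree + 1) (lt_add_one _)]
      rw [tmul_sum]
      refine Finset.sum_congr rfl fun i _ => ?_
      rw [← Polynomial.C_mul_X_pow_eq_monomial, ← Polynomial.smul_eq_C_mul,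
        tmul_smul, smul_tmul']
    | add a b ha hb =>
      obtain ⟨Da, va, hva⟩ := ha
      obtain ⟨Db, vb, hvb⟩ := hb
      refine ⟨max Da Db, fun i =>
        (if i ∈ range (Da+1) then va i else 0) + (if i ∈ range (Db+1) then vb i else 0), ?_⟩
      have ea : ∑ i ∈ range (max Da Db + 1),
            (if i ∈ range (Da+1) then va i else (0:V)) ⊗ₜ[ℂ] ((Polynomial.X : Polynomial ℂ) ^ i)
          = ∑ i ∈ range (Da + 1), va i ⊗ₜ ((Polynomial.X : Polynomial ℂ) ^ i) := by
        rw [← Finset.sum_subset (s₁ := range (Da+1)) (s₂ := range (max Da Db + 1))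
          (by intro i hi; simp at hi ⊢; omega)
          (by intro i _ hi; rw [if_neg hi, TensorProduct.zero_tmul])]
        exact Finset.sum_congr rfl fun i hi => by rw [if_pos hi]
      have eb : ∑ i ∈ range (max Da Db + 1),
            (if i ∈ range (Db+1) then vb i else (0:V)) ⊗ₜ[ℂ] ((Polynomial.X : Polynomial ℂ) ^ i)
          = ∑ i ∈ range (Db + 1), vb i ⊗ₜ ((Polynomial.X : Polynomial ℂ) ^ i) := by
        rw [← Finset.sum_subset (s₁ := range (Db+1)) (s₂ := range (max Da Db + 1))
          (by intro i hi; simp at hi ⊢; omega)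
          (by intro i _ hi; rw [if_neg hi, TensorProduct.zero_tmul])]
        exact Finset.sum_congr rfl fun i hi => by rw [if_pos hi]
      rw [hva, hvb, ← ea, ← eb, ← Finset.sum_add_distrib]
      exact Finset.sum_congr rfl fun i _ => by rw [TensorProduct.add_tmul]
  obtain ⟨D, v, hv⟩ := H
  have hcoef := repr_of_family D v x hv
  refine ⟨D, fun i hi => by rw [hcoef, if_neg (by omega)], ?_⟩
  have e2 : ∑ i ∈ range (D + 1), piC i x ⊗ₜ[ℂ] ((Polynomial.X : Polynomial ℂ) ^ i)
      = ∑ i ∈ range (D + 1), v i ⊗ₜ[ℂ] ((Polynomial.X : Polynomial ℂ) ^ i) :=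
    Finset.sum_congr rfl fun i hi => by
      rw [hcoef, if_pos (by simp at hi; omega)]
  exact hv.trans e2.symm


lemma vandermonde_coeffs_mem {W : Type*} [AddCommGroup W] [Module ℂ W]
    (N : Submodule ℂ W) (D : ℕ) (y : ℕ → W)
    (h : ∀ k : ℤ, ∑ m ∈ range (D + 1), (k : ℂ) ^ m • y m ∈ N) :
    ∀ m ∈ range (D + 1), y m ∈ N := by
  set A : Matrix (Fin (D + 1)) (Fin (D + 1)) ℂ :=
    Matrix.vandermonde (fun n => ((n : ℕ) : ℂ)) with hA
  have hdet : IsUnit A.det := by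
    rw [hA, Matrix.det_vandermonde]
    apply IsUnit.mk0
    apply Finset.prod_ne_zero_iff.mpr
    intro i _
    apply Finset.prod_ne_zero_iff.mpr
    intro j hj
    have hij0 : i < j := Finset.mem_Ioi.mp hj
    have hij : (i : ℕ) < (j : ℕ) := hij0
    refine sub_ne_zero_of_ne ?_
    exact_mod_cast (Nat.ne_of_lt hij).symm
  have hinv := Matrix.nonsing_inv_mul A hdet
  intro m hm
  have hmD : m < D + 1 := Finset.mem_range.mp hm
  set mf : Fin (D + 1) := ⟨m, hmD⟩
  have key : y m = ∑ n : Fin (D + 1), (A⁻¹ mf n) • (∑ m' : Fin (D + 1), A n m' • y m') := by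
    have : ∀ n, (A⁻¹ mf n) • (∑ m' : Fin (D + 1), A n m' • y m')
        = ∑ m' : Fin (D + 1), (A⁻¹ mf n * A n m') • y m' := by
      intro n
      rw [Finset.smul_sum]
      exact Finset.sum_congr rfl fun m' _ => by rw [smul_smul]
    rw [Finset.sum_congr rfl fun n _ => this n, Finset.sum_comm]
    have : ∀ m' : Fin (D + 1), ∑ n : Fin (D+1), (A⁻¹ mf n * A n m') • y m'
        = ((A⁻¹ * A) mf m') • y m' := by
      intro m'
      rw [Matrix.mul_apply, Finset.sum_smul]
    rw [Finset.sum_congr rfl fun m' _ => this m', hinv]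
    simp only [Matrix.one_apply]
    rw [Finset.sum_congr rfl (fun m' _ => by rw [ite_smul, zero_smul, one_smul]),
      Finset.sum_ite_eq]
    simp [mf]
  rw [key]
  apply Submodule.sum_mem
  intro n _
  apply Submodule.smul_mem
  have hn := h (n : ℕ)
  have : ∑ m' : Fin (D + 1), A n m' • y m' = ∑ m' ∈ range (D + 1), (((n:ℕ) : ℂ)) ^ m' • y m' := by
    rw [← Fin.sum_univ_eq_sum_range (fun m' => (((n:ℕ):ℂ)) ^ m' • y m') (D+1)]
    exact Finset.sum_congr rfl fun m' _ => by rw [hA]; simp [Matrix.vandermonde]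
  rw [this]
  have hcast : ∀ m' : ℕ, ((((n:ℕ):ℤ)) : ℂ) ^ m' • y m' = (((n:ℕ):ℂ)) ^ m' • y m' := by
    intro m'; norm_num
  rw [← Finset.sum_congr rfl fun m' _ => hcast m']
  exact hn

lemma Y_mem (B : ℕ → V →ₗ[ℂ] V) (r : ℕ) (lam al : ℂ) (hlam : lam ≠ 0)
    (N : Submodule ℂ (V ⊗[ℂ] Polynomial ℂ))
    (hNinv : ∀ k : ℤ, ∀ x ∈ N, M1Op B r lam al k x ∈ N)
    (d : ℕ) (v : ℕ → V)
    (hx : ∑ i ∈ range (d+1), v i ⊗ₜ[ℂ] ((Polynomial.X : Polynomial ℂ) ^ i) ∈ N) :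
    ∀ m ∈ range (d + r + 2), ∑ i ∈ range (d+1), Yc B r al (v i) i m ∈ N := by
  have := vandermonde_coeffs_mem N (d + r + 1)
    (fun m => ∑ i ∈ range (d+1), Yc B r al (v i) i m) ?_
  · intro m hm
    exact this m (by simp at hm ⊢; omega)
  · intro k
    have he : ∑ m ∈ range (d + r + 1 + 1),
          (k:ℂ)^m • ∑ i ∈ range (d+1), Yc B r al (v i) i m
        = (lam ^ (-k)) • M1Op B r lam al k
            (∑ i ∈ range (d+1), v i ⊗ₜ[ℂ] ((Polynomial.X : Polynomial ℂ) ^ i)) := by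
      rw [map_sum, Finset.smul_sum,
        Finset.sum_congr rfl (fun i hi =>
          expand_pure B r lam al hlam i (v i) k (d + r + 1 + 1) (by simp at hi; omega)),
        Finset.sum_comm]
      exact Finset.sum_congr rfl fun m _ => Finset.smul_sum
    rw [he]
    exact N.smul_mem _ (hNinv k _ hx)

lemma Yc_w1 (B : ℕ → V →ₗ[ℂ] V) (r : ℕ) (al : ℂ) (w : V) (i : ℕ) (hir : i ≤ r) :
    Yc B r al w 0 (i+1)
      = (if i = 0 then (-al) • (w ⊗ₜ[ℂ] (1 : Polynomial ℂ)) else 0)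
        + (((i+1).factorial : ℂ))⁻¹ • ((B i w) ⊗ₜ[ℂ] (1 : Polynomial ℂ)) := by
  rw [Yc, Finset.sum_range_one]
  rw [if_neg (by omega)]
  have h3 : ∑ j ∈ range (r + 1),
      (if 0 - 0 + (j+1) = i + 1 then
        ((-1:ℂ)^(0-0) * ((0:ℕ).choose 0 : ℂ) * (((j+1).factorial : ℂ))⁻¹) •
          ((B j w) ⊗ₜ[ℂ] ((Polynomial.X : Polynomial ℂ) ^ 0)) else 0)
      = (((i+1).factorial : ℂ))⁻¹ • ((B i w) ⊗ₜ[ℂ] (1 : Polynomial ℂ)) := by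
    rw [Finset.sum_eq_single_of_mem i (by simp; omega)]
    · rw [if_pos (by omega)]
      simp
    · intro j _ hji
      rw [if_neg (by omega)]
  rw [h3, zero_add]
  congr 1
  by_cases hi0 : i = 0
  · rw [if_pos (by omega), if_pos hi0]
    simp
  · rw [if_neg (by omega), if_neg hi0]

end Aux

/-- **(from [LZ], Remark 2.1(2)).** Let `r ∈ ℤ_{≥0}`, `λ ∈ ℂ*`, `α ∈ ℂ`, and
`V` an irreducible `L̄_r`-module. Then `M(V,Ω(λ,α))` is reducible if and only if
`V ≅ V_α`, i.e. `V` is one-dimensional with `B_0 = α·id` and `B_i = 0` for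
`1 ≤ i ≤ r`. -/
theorem statement12 {V : Type*} [AddCommGroup V] [Module ℂ V]
    (r : ℕ) (lam al : ℂ) (hlam : lam ≠ 0)
    (B : ℕ → V →ₗ[ℂ] V)
    (hBtop : ∀ i, r < i → B i = 0)
    (hBrel : ∀ i j, i ≤ r → j ≤ r →
      B i ∘ₗ B j - B j ∘ₗ B i = (((j : ℂ) - (i : ℂ)) • B (i + j) : V →ₗ[ℂ] V))
    (hVne : ∃ v : V, v ≠ 0)
    (hVirr : ∀ U : Submodule ℂ V, (∀ i, i ≤ r → ∀ w ∈ U, B i w ∈ U) → U = ⊥ ∨ U = ⊤) :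
    (∃ N : Submodule ℂ (V ⊗[ℂ] Polynomial ℂ),
        (∀ k : ℤ, ∀ x ∈ N, M1Op B r lam al k x ∈ N) ∧ N ≠ ⊥ ∧ N ≠ ⊤)
    ↔ (∃ e : V ≃ₗ[ℂ] ℂ, (∀ w : V, e (B 0 w) = al * e w) ∧
        ∀ i, 1 ≤ i → i ≤ r → ∀ w : V, e (B i w) = 0) := by
  classical
  constructor
  · rintro ⟨N, hNinv, hNbot, hNtop⟩
    -- L_0 is multiplication by X
    have hL0 : ∀ (v : V) (n : ℕ),
        M1Op B r lam al 0 (v ⊗ₜ[ℂ] ((Polynomial.X : Polynomial ℂ) ^ n))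
          = v ⊗ₜ[ℂ] ((Polynomial.X : Polynomial ℂ) ^ (n+1)) := by
      intro v n
      have hsh0 : shiftP (0 : ℂ) ((Polynomial.X : Polynomial ℂ) ^ n)
          = (Polynomial.X : Polynomial ℂ) ^ n := by
        simp [shiftP]
      simp only [M1Op, LinearMap.add_apply, LinearMap.sum_apply, LinearMap.smul_apply,
        TensorProduct.map_tmul, LinearMap.id_coe, id_eq, omegaL, LinearMap.coe_comp,
        Function.comp_apply, LinearMap.mulLeft_apply, hsh0, Int.cast_zero]
      rw [zpow_zero, one_smul]
      simp only [Int.cast_zero, zero_mul, map_zero, sub_zero, zero_pow (Nat.succ_ne_zero _),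
        zero_div, zero_smul, Finset.sum_const_zero, add_zero, one_smul]
      rw [← pow_succ']
    -- the subspace W = {w | w ⊗ 1 ∈ N}
    set W : Submodule ℂ V :=
      Submodule.comap ((TensorProduct.mk ℂ V (Polynomial ℂ)).flip 1) N with hWdef
    have hWmem : ∀ w : V, w ∈ W ↔ w ⊗ₜ[ℂ] (1 : Polynomial ℂ) ∈ N := by
      intro w
      simp [hWdef, TensorProduct.mk_apply]
    have hWinv : ∀ i, i ≤ r → ∀ w ∈ W, B i w ∈ W := by
      intro i hir w hw
      rw [hWmem] at hw
      have hx1 : ∑ i ∈ range (0+1), w ⊗ₜ[ℂ] ((Polynomial.X : Polynomial ℂ) ^ i) ∈ N := by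
        simpa using hw
      have hmem := Y_mem B r lam al hlam N hNinv 0 (fun _ => w) hx1 (i+1) (by simp; omega)
      rw [Finset.sum_range_one, Yc_w1 B r al w i hir] at hmem
      rw [hWmem]
      by_cases hi0 : i = 0
      · subst hi0
        rw [if_pos rfl] at hmem
        have : (B 0 w) ⊗ₜ[ℂ] (1 : Polynomial ℂ)
            = (((0+1).factorial : ℂ)) • ((-al) • (w ⊗ₜ[ℂ] (1 : Polynomial ℂ))
              + (((0+1).factorial : ℂ))⁻¹ • ((B 0 w) ⊗ₜ[ℂ] (1 : Polynomial ℂ)))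
              + (((0+1).factorial : ℂ) * al) • (w ⊗ₜ[ℂ] (1 : Polynomial ℂ)) := by
          simp [smul_smul, smul_add]
        rw [this]
        exact N.add_mem (N.smul_mem _ hmem) (N.smul_mem _ hw)
      · rw [if_neg hi0, zero_add] at hmem
        have : (B i w) ⊗ₜ[ℂ] (1 : Polynomial ℂ)
            = (((i+1).factorial : ℂ)) • ((((i+1).factorial : ℂ))⁻¹ •
                ((B i w) ⊗ₜ[ℂ] (1 : Polynomial ℂ))) := by
          rw [smul_smul, mul_inv_cancel₀ (by exact_mod_cast (Nat.factorial_ne_zero (i+1))), one_smul]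
        rw [this]
        exact N.smul_mem _ hmem
    have hW : ∀ w : V, w ⊗ₜ[ℂ] (1 : Polynomial ℂ) ∈ N → w = 0 := by
      rcases hVirr W hWinv with hbot | htop
      · intro w hw
        have : w ∈ W := (hWmem w).mpr hw
        rw [hbot] at this
        simpa using this
      · exfalso
        apply hNtop
        rw [Submodule.eq_top_iff']
        intro x
        have hall : ∀ (n : ℕ) (v : V), v ⊗ₜ[ℂ] ((Polynomial.X : Polynomial ℂ) ^ n) ∈ N := by
          intro n
          induction n with
          | zero =>
            intro v
            have : v ∈ W := htop ▸ Submodule.mem_top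
            rw [hWmem] at this
            simpa using this
          | succ n ih =>
            intro v
            have := hNinv 0 _ (ih v)
            rwa [hL0] at this
        obtain ⟨D, hD, hrepr⟩ := exists_repr x
        rw [hrepr]
        exact N.sum_mem fun i _ => hall i _
    -- a nonzero element of N and its top degree
    obtain ⟨x₀, hx₀mem, hx₀ne⟩ := (Submodule.ne_bot_iff N).mp hNbot
    obtain ⟨D, hD, hrepr⟩ := exists_repr x₀
    have hSne : ((range (D+1)).filter (fun i => piC i x₀ ≠ 0)).Nonempty := by
      by_contra hc
      rw [Finset.not_nonempty_iff_eq_empty, Finset.filter_eq_empty_iff] at hc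
      apply hx₀ne
      rw [hrepr]
      apply Finset.sum_eq_zero
      intro i hi
      have : piC i x₀ = 0 := by
        by_contra hne
        exact (hc hi) hne
      rw [this, TensorProduct.zero_tmul]
    set d : ℕ := ((range (D+1)).filter (fun i => piC i x₀ ≠ 0)).max' hSne with hddef
    have hd1 : piC d x₀ ≠ 0 := (Finset.mem_filter.mp (Finset.max'_mem _ hSne)).2
    have hdD : d ≤ D := by
      have h := (Finset.mem_filter.mp (Finset.max'_mem _ hSne)).1
      rw [← hddef] at h
      simp at h
      omega
    have hhigh : ∀ i, d < i → piC i x₀ = 0 := by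
      intro i hi
      by_cases hiD : i ≤ D
      · by_contra hne
        have : i ∈ (range (D+1)).filter (fun i => piC i x₀ ≠ 0) :=
          Finset.mem_filter.mpr ⟨by simp; omega, hne⟩
        have := Finset.le_max' _ i this
        omega
      · exact hD i (by omega)
    have hrepr' : x₀ = ∑ i ∈ range (d+1), piC i x₀ ⊗ₜ[ℂ] ((Polynomial.X : Polynomial ℂ) ^ i) := by
      have hsub : range (d+1) ⊆ range (D+1) := Finset.range_subset_range.mpr (by omega)
      have hz : ∀ i ∈ range (D+1), i ∉ range (d+1) →
          piC i x₀ ⊗ₜ[ℂ] ((Polynomial.X : Polynomial ℂ) ^ i) = 0 := by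
        intro i hi hid
        rw [hhigh i (by simp at hid; omega), TensorProduct.zero_tmul]
      conv_lhs => rw [hrepr]
      exact (Finset.sum_subset hsub hz).symm
    -- the core extraction
    have core : ∀ s : ℕ, s ≤ r → (∀ j, s < j → B j = 0) →
        ((-1:ℂ)^d * (((s+1).factorial : ℂ))⁻¹) • (B s (piC d x₀))
          + (if s = 0 then ((-1:ℂ)^d * (-al)) • (piC d x₀) else 0) = 0 := by
      intro s hs hB'
      have hmem := Y_mem B r lam al hlam N hNinv d (fun i => piC i x₀)
        (by rw [← hrepr']; exact hx₀mem) (d+s+1) (by simp; omega)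
      have hcomp : ∑ i ∈ range (d+1), Yc B r al (piC i x₀) i (d+s+1)
          = (((-1:ℂ)^d * (((s+1).factorial : ℂ))⁻¹) • (B s (piC d x₀))
              + (if s = 0 then ((-1:ℂ)^d * (-al)) • (piC d x₀) else 0)) ⊗ₜ[ℂ]
                (1 : Polynomial ℂ) := by
        rw [Finset.sum_eq_single_of_mem d (Finset.self_mem_range_succ d)
          (fun i hi hne => Yc_eq_zero B r al s hB' d i (by simp at hi; omega) hne _)]
        exact Yc_top B r al s hs hB' d _
      rw [hcomp] at hmem
      exact hW _ hmem
    -- kill B_j for j ≥ 1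
    have hkill : ∀ t : ℕ, ∀ j, r - t < j → B j = 0 := by
      intro t
      induction t with
      | zero => exact fun j hj => hBtop j (by omega)
      | succ t ih =>
        intro j hj
        by_cases hjr : r - t < j
        · exact ih j hjr
        · have hjeq : j = r - t := by omega
          have hs1 : 1 ≤ r - t := by omega
          subst hjeq
          have hweq := core (r - t) (by omega) ih
          rw [if_neg (by omega), add_zero] at hweq
          have hc : ((-1:ℂ)^d * (((r-t+1).factorial : ℂ))⁻¹) ≠ 0 := by
            apply mul_ne_zero
            · exact pow_ne_zero _ (neg_ne_zero.mpr one_ne_zero)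
            · exact inv_ne_zero (by exact_mod_cast Nat.factorial_ne_zero (r-t+1))
          have hBsw : B (r - t) (piC d x₀) = 0 :=
            (smul_eq_zero.mp hweq).resolve_left hc
          have hKinv : ∀ i, i ≤ r → ∀ u ∈ LinearMap.ker (B (r - t)), B i u ∈ LinearMap.ker (B (r - t)) := by
            intro i hir u hu
            rw [LinearMap.mem_ker] at hu ⊢
            by_cases hi0 : i = 0
            · subst hi0
              have hrel := hBrel 0 (r - t) (by omega) (by omega)
              have := congrArg (fun (F : V →ₗ[ℂ] V) => F u) hrel
              simp only [LinearMap.sub_apply, LinearMap.coe_comp, Function.comp_apply,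
                LinearMap.smul_apply] at this
              -- B 0 (B s u) - B s (B 0 u) = (s - 0) • B s u
              have : B (r - t) (B 0 u) = B 0 (B (r - t) u)
                  - (((r - t : ℕ) : ℂ) - ((0:ℕ) : ℂ)) • B (0 + (r - t)) u := by
                rw [← this]; ring_nf
                abel
              rw [this, hu]
              have hz : B (0 + (r - t)) u = 0 := by rw [zero_add, hu]
              rw [hz, map_zero, smul_zero, sub_zero]
            · have hi1 : 1 ≤ i := by omega
              have hz : B (r - t + i) = 0 := by
                by_cases hri : r < r - t + i
                · exact hBtop _ hri
                · exact ih _ (by omega)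
              have hrel := hBrel (r - t) i (by omega) hir
              have := congrArg (fun (F : V →ₗ[ℂ] V) => F u) hrel
              simp only [LinearMap.sub_apply, LinearMap.coe_comp, Function.comp_apply,
                LinearMap.smul_apply] at this
              -- B s (B i u) - B i (B s u) = (i - s) • B (s+i) u
              rw [hz] at this
              simp only [LinearMap.zero_apply, smul_zero] at this
              have h2 : B (r - t) (B i u) = B i (B (r - t) u) := by
                have := sub_eq_zero.mp this
                exact this
              rw [h2, hu, map_zero]
          rcases hVirr _ hKinv with hKbot | hKtop
          · exfalso
            apply hd1
            have : piC d x₀ ∈ LinearMap.ker (B (r - t)) := hBsw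
            rw [hKbot] at this
            simpa using this
          · exact LinearMap.ker_eq_top.mp hKtop
    have hBpos : ∀ j, 1 ≤ j → B j = 0 := fun j hj => hkill r j (by omega)
    -- B 0 = al • id
    have hw0eq := core 0 (by omega) (fun j hj => hBpos j hj)
    rw [if_pos rfl] at hw0eq
    have hB0d : B 0 (piC d x₀) = al • (piC d x₀) := by
      have hfac : (((0+1).factorial : ℕ) : ℂ) = 1 := by norm_num
      rw [hfac, inv_one, mul_one] at hw0eq
      have h2 : ((-1:ℂ)^d) • (B 0 (piC d x₀) + (-al) • (piC d x₀)) = 0 := by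
        rw [smul_add, smul_smul]
        exact hw0eq
      have h3 := (smul_eq_zero.mp h2).resolve_left
        (pow_ne_zero _ (neg_ne_zero.mpr one_ne_zero))
      exact eq_of_sub_eq_zero (by rw [sub_eq_add_neg, ← neg_smul]; exact h3)
    have hB0 : ∀ v : V, B 0 v = al • v := by
      have hK0inv : ∀ i, i ≤ r → ∀ u ∈ LinearMap.ker (B 0 - al • (LinearMap.id : V →ₗ[ℂ] V)),
          B i u ∈ LinearMap.ker (B 0 - al • (LinearMap.id : V →ₗ[ℂ] V)) := by
        intro i hir u hu
        rw [LinearMap.mem_ker] at hu ⊢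
        simp only [LinearMap.sub_apply, LinearMap.smul_apply, LinearMap.id_coe, id_eq] at hu ⊢
        by_cases hi0 : i = 0
        · subst hi0
          have : B 0 u = al • u := by
            have := sub_eq_zero.mp hu
            exact this
          rw [this, map_smul, this, sub_self]
        · rw [hBpos i (by omega)]
          simp
      rcases hVirr _ hK0inv with hKbot | hKtop
      · exfalso
        apply hd1
        have : piC d x₀ ∈ LinearMap.ker (B 0 - al • (LinearMap.id : V →ₗ[ℂ] V)) := by
          rw [LinearMap.mem_ker]
          simp only [LinearMap.sub_apply, LinearMap.smul_apply, LinearMap.id_coe, id_eq]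
          rw [hB0d, sub_self]
        rw [hKbot] at this
        simpa using this
      · intro v
        have : v ∈ LinearMap.ker (B 0 - al • (LinearMap.id : V →ₗ[ℂ] V)) :=
          hKtop ▸ Submodule.mem_top
        rw [LinearMap.mem_ker] at this
        simp only [LinearMap.sub_apply, LinearMap.smul_apply, LinearMap.id_coe, id_eq] at this
        exact sub_eq_zero.mp this
    -- V is one-dimensional
    obtain ⟨v0, hv0⟩ := hVne
    have hUinv : ∀ i, i ≤ r → ∀ u ∈ Submodule.span ℂ {v0}, B i u ∈ Submodule.span ℂ {v0} := by
      intro i hir u hu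
      by_cases hi0 : i = 0
      · subst hi0
        rw [hB0 u]
        exact Submodule.smul_mem _ _ hu
      · rw [hBpos i (by omega)]
        simp
    have hUtop : Submodule.span ℂ {v0} = ⊤ := by
      rcases hVirr _ hUinv with hUbot | hUtop
      · exfalso
        apply hv0
        have : v0 ∈ Submodule.span ℂ {v0} := Submodule.mem_span_singleton_self v0
        rw [hUbot] at this
        simpa using this
      · exact hUtop
    have hbij : Function.Bijective (LinearMap.toSpanSingleton ℂ V v0) := by
      constructor
      · intro a b hab
        simp only [LinearMap.toSpanSingleton_apply] at hab
        by_contra hne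
        have : (a - b) • v0 = 0 := by rw [sub_smul, hab, sub_self]
        rcases smul_eq_zero.mp this with h | h
        · exact hne (sub_eq_zero.mp h)
        · exact hv0 h
      · rw [← LinearMap.range_eq_top, ← LinearMap.span_singleton_eq_range, hUtop]
    refine ⟨(LinearEquiv.ofBijective _ hbij).symm, ?_, ?_⟩
    · intro w
      rw [hB0 w, map_smul, smul_eq_mul]
    · intro i hi1 hir w
      rw [hBpos i hi1]
      simp
  · rintro ⟨e, he0, he1⟩
    have hB0 : ∀ w : V, B 0 w = al • w := by
      intro w
      apply e.injective
      rw [he0 w, map_smul, smul_eq_mul]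
    have hBi : ∀ j, 1 ≤ j → B j = 0 := by
      intro j hj
      by_cases hjr : j ≤ r
      · ext w
        apply e.injective
        rw [he1 j hj hjr w]
        simp
      · exact hBtop j (by omega)
    -- evaluation at 0
    set E : V ⊗[ℂ] Polynomial ℂ →ₗ[ℂ] V :=
      (TensorProduct.rid ℂ V).toLinearMap ∘ₗ
        LinearMap.lTensor V (Polynomial.aeval (0:ℂ)).toLinearMap with hEdef
    have hEtmul : ∀ (v : V) (f : Polynomial ℂ), E (v ⊗ₜ[ℂ] f) = (Polynomial.aeval (0:ℂ) f) • v := by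
      intro v f
      simp [hEdef, TensorProduct.rid_tmul]
    have hEM : ∀ (k : ℤ) (x : V ⊗[ℂ] Polynomial ℂ), E (M1Op B r lam al k x) = 0 := by
      intro k x
      have hcomp : E ∘ₗ M1Op B r lam al k = 0 := by
        apply TensorProduct.ext'
        intro v f
        simp only [LinearMap.coe_comp, Function.comp_apply, LinearMap.zero_apply]
        have hshv : Polynomial.aeval (0:ℂ) (shiftP (k:ℂ) f) = Polynomial.aeval (-(k:ℂ)) f := by
          rw [shiftP, AlgHom.toLinearMap_apply, ← Polynomial.aeval_algHom_apply]
          congr 1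
          simp
        simp only [M1Op, LinearMap.add_apply, LinearMap.sum_apply, LinearMap.smul_apply,
          TensorProduct.map_tmul, LinearMap.id_coe, id_eq, omegaL, LinearMap.coe_comp,
          Function.comp_apply, LinearMap.mulLeft_apply]
        rw [map_add, hEtmul, map_sum]
        have hsum : ∀ j ∈ range (r+1),
            E ((((k : ℂ) ^ (j + 1)) / ((j + 1).factorial : ℂ)) •
              ((B j v) ⊗ₜ[ℂ] ((lam ^ k) • (shiftP (k:ℂ) f))))
            = (if j = 0 then (((k : ℂ)) * (lam ^ k * Polynomial.aeval (-(k:ℂ)) f) * al) • v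
                else 0) := by
          intro j hj
          rw [map_smul, hEtmul, map_smul, hshv]
          by_cases hj0 : j = 0
          · subst hj0
            rw [if_pos rfl, hB0 v]
            have h1 : ((k:ℂ) ^ (0+1) / (((0+1).factorial : ℕ) : ℂ)) = (k:ℂ) := by norm_num
            rw [h1]
            simp only [smul_smul, smul_eq_mul]
            congr 1
            ring
          · rw [hBi j (by omega)]
            simp [if_neg hj0]
        rw [Finset.sum_congr rfl hsum,
          Finset.sum_ite_eq' (range (r+1)) 0
            (fun _ => (((k : ℂ)) * (lam ^ k * Polynomial.aeval (-(k:ℂ)) f) * al) • v),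
          if_pos (by simp)]
        rw [map_smul]
        have h2 : (Polynomial.aeval (0:ℂ))
            ((Polynomial.X - Polynomial.C ((k:ℂ) * al)) * shiftP (k:ℂ) f)
            = -((k:ℂ) * al) * Polynomial.aeval (-(k:ℂ)) f := by
          rw [map_mul, hshv]
          simp
        rw [h2]
        simp only [smul_eq_mul, smul_smul]
        rw [← add_smul]
        convert zero_smul ℂ v using 2
        ring
      have := congrArg (fun (F : V ⊗[ℂ] Polynomial ℂ →ₗ[ℂ] V) => F x) hcomp
      simpa using this
    obtain ⟨v1, hv1⟩ := hVne
    refine ⟨LinearMap.ker E, fun k x hx => ?_, ?_, ?_⟩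
    · rw [LinearMap.mem_ker]
      exact hEM k x
    · rw [Submodule.ne_bot_iff]
      refine ⟨v1 ⊗ₜ[ℂ] (Polynomial.X : Polynomial ℂ), ?_, ?_⟩
      · rw [LinearMap.mem_ker, hEtmul]
        simp
      · intro hc
        apply hv1
        have := congrArg (piC 1) hc
        rw [piC_tmul, map_zero] at this
        simpa using this
    · intro hc
      have : v1 ⊗ₜ[ℂ] (1 : Polynomial ℂ) ∈ LinearMap.ker E := hc ▸ Submodule.mem_top
      rw [LinearMap.mem_ker, hEtmul] at this
      simp at this
      exact hv1 this
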